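/- At the barycenter z* = (1/d, …, 1/d) of the simplex, the Jacobian of F(z) = −z + π(z) equals (α−1)I − (α/d)N, where N is the d×d all-ones matrix. Its eigenvalues are −1 (with eigenvector (1,…,1), multiplicity 1) and α−1 (with multiplicity d−1, eigenvectors the hyperplane Σ x_i = 0). Hence for α > 1 the barycenter is a linearly unstable equilibrium. -/

import Mathlib

open Finset

/-- At the barycenter `z* = (1/d, …, 1/d)`, the Jacobian matrix of
`F(z)_i = -z_i + z_i^α / ∑_j z_j^α` equals `(α-1)I - (α/d)N` where `N` is the all-ones
matrix; the vector `(1,…,1)` is an eigenvector for the eigenvalue `-1`, and every vector of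
the hyperplane `∑ x_i = 0` is an eigenvector for the eigenvalue `α-1` (which is positive
since `α > 1`, so the barycenter is linearly unstable). -/
theorem jacobian_at_barycenter (d : ℕ) (hd : 2 ≤ d) (α : ℝ) (hα : 1 < α)
    (F : (Fin d → ℝ) → (Fin d → ℝ))
    (hF : ∀ z : Fin d → ℝ, ∀ i, F z i = -(z i) + z i ^ α / (∑ k, z k ^ α))
    (DF : Matrix (Fin d) (Fin d) ℝ)
    (hDF : ∀ i k, DF i k =
      fderiv ℝ (fun z : Fin d → ℝ => F z i) (fun _ => (1 : ℝ) / d) (Pi.single k 1)) :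
    DF = (α - 1) • (1 : Matrix (Fin d) (Fin d) ℝ)
        - (α / d) • (Matrix.of fun _ _ => (1 : ℝ)) ∧
    DF.mulVec (fun _ => 1) = (-1 : ℝ) • (fun _ => (1 : ℝ)) ∧
    (∀ x : Fin d → ℝ, ∑ i, x i = 0 → DF.mulVec x = (α - 1) • x) ∧
    0 < α - 1 := by
  have hd0 : (0:ℝ) < d := by
    have : (2:ℝ) ≤ d := by exact_mod_cast hd
    linarith
  have hdne : (d:ℝ) ≠ 0 := ne_of_gt hd0
  set c : ℝ := 1 / d with hcdef
  have hc : 0 < c := by positivity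
  set p : Fin d → ℝ := fun _ => c with hp
  have key : ∀ i k, DF i k = (α - 1) * (if i = k then 1 else 0) - α / d := by
    intro i k
    have hg : ∀ j : Fin d, HasFDerivAt (fun z : Fin d → ℝ => z j ^ α)
        ((α * c ^ (α - 1)) • (ContinuousLinearMap.proj j : (Fin d → ℝ) →L[ℝ] ℝ)) p := by
      intro j
      have h := (ContinuousLinearMap.proj j : (Fin d → ℝ) →L[ℝ] ℝ).hasFDerivAt (x := p)
      have h2 := h.rpow_const (p := α) (Or.inl (ne_of_gt hc))
      simpa using h2
    have hS : HasFDerivAt (fun z : Fin d → ℝ => ∑ k, z k ^ α)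
        (∑ j, (α * c ^ (α - 1)) • (ContinuousLinearMap.proj j : (Fin d → ℝ) →L[ℝ] ℝ)) p :=
      HasFDerivAt.fun_sum fun j _ => hg j
    have hSp : (∑ k, p k ^ α) = d * c ^ α := by
      simp [hp, mul_comm]
    have hSne : (∑ k, p k ^ α) ≠ 0 := by
      rw [hSp]; positivity
    have hinv : HasFDerivAt (fun z : Fin d → ℝ => (∑ k, z k ^ α)⁻¹)
        ((-(((∑ k, p k ^ α)) ^ 2)⁻¹) • (∑ j, (α * c ^ (α - 1)) •
          (ContinuousLinearMap.proj j : (Fin d → ℝ) →L[ℝ] ℝ))) p :=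
      (hasDerivAt_inv hSne).comp_hasFDerivAt p hS
    have hquot := (hg i).fun_mul hinv
    have hneg : HasFDerivAt (fun z : Fin d → ℝ => -(z i))
        (-(ContinuousLinearMap.proj i : (Fin d → ℝ) →L[ℝ] ℝ)) p :=
      ((ContinuousLinearMap.proj i : (Fin d → ℝ) →L[ℝ] ℝ).hasFDerivAt (x := p)).neg
    have hfull := hneg.fun_add hquot
    have hFi : (fun z : Fin d → ℝ => F z i)
        = fun z => -(z i) + z i ^ α * (∑ k, z k ^ α)⁻¹ := by
      funext z; rw [hF z i, div_eq_mul_inv]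
    rw [hDF, hFi, hfull.fderiv]
    have hsingle : ∀ j : Fin d, (Pi.single k 1 : Fin d → ℝ) j = if j = k then 1 else 0 := by
      intro j; simp [Pi.single_apply]
    have hsum1 : (∑ j : Fin d, (Pi.single k (1:ℝ)) j) = 1 := by
      simp [Finset.sum_pi_single']
    have hca : c ^ (α - 1) = c ^ α / c := by
      rw [Real.rpow_sub hc, Real.rpow_one]
    have htne : c ^ α ≠ 0 := ne_of_gt (Real.rpow_pos_of_pos hc α)
    simp only [ContinuousLinearMap.add_apply, ContinuousLinearMap.neg_apply,
      ContinuousLinearMap.smul_apply, ContinuousLinearMap.sub_apply,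
      ContinuousLinearMap.coe_sum', Finset.sum_apply,
      ContinuousLinearMap.proj_apply, hSp, smul_eq_mul, hsingle]
    have hsum3 : (∑ x : Fin d, α * c ^ (α - 1) * if x = k then 1 else 0)
        = α * c ^ (α - 1) := by simp
    rw [hsum3]
    have hpi : p i = c := rfl
    rw [hpi, hca, hcdef]
    set t : ℝ := (1/(d:ℝ)) ^ α with ht
    have htpos : 0 < t := Real.rpow_pos_of_pos (by positivity) α
    by_cases hik : i = k
    · simp only [hik, if_pos rfl]
      field_simp
      ring
    · simp only [if_neg hik]
      field_simp
      ring
  refine ⟨?_, ?_, ?_, by linarith⟩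
  · ext i k
    simp [key, Matrix.sub_apply, Matrix.smul_apply, Matrix.one_apply, smul_eq_mul]
  · funext i
    simp only [Matrix.mulVec, dotProduct, key, mul_one, Pi.smul_apply, smul_eq_mul]
    rw [Finset.sum_sub_distrib]
    have e1 : (∑ x : Fin d, (α - 1) * if i = x then 1 else 0) = α - 1 := by simp
    have e2 : (∑ _x : Fin d, α / (d:ℝ)) = α := by
      rw [Finset.sum_const, Finset.card_univ, Fintype.card_fin, nsmul_eq_mul]
      field_simp
    rw [e1, e2]; ring
  · intro x hx
    funext i
    simp only [Matrix.mulVec, dotProduct, key, Pi.smul_apply, smul_eq_mul]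
    have : ∀ k, ((α - 1) * (if i = k then 1 else 0) - α / d) * x k
        = (α - 1) * ((if i = k then 1 else 0) * x k) - (α / d) * x k := by
      intro k; ring
    simp only [this]
    rw [Finset.sum_sub_distrib, ← Finset.mul_sum, ← Finset.mul_sum, hx]
    simp [Finset.sum_ite_eq]
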